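/- Let A be an abelian category, S ⊆ A a Serre subcategory, i : S ⥤ A the inclusion, and suppose the quotient functor r : A ⥤ A/S has a fully faithful left adjoint r_L. Then i has a left adjoint i_L given by i_L(X) = Coker(ε_X : r_L(r(X)) → X), where ε is the counit of r_L ⊣ r. -/

import Mathlib

open CategoryTheory Limits

section Aux

variable {A Q : Type*} [Category A] [Category Q] [Abelian A] [Abelian Q]
    (r : A ⥤ Q) (rL : Q ⥤ A) (adj : rL ⊣ r)
    [r.Additive] [PreservesFiniteLimits r] [PreservesFiniteColimits r]

/-- `r` applied to the counit is a split epi, so `r` of the cokernel is zero. -/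
lemma r_coker_zero (X : A) : IsZero (r.obj (cokernel (adj.counit.app X))) := by
  have hsplit : SplitEpi (r.map (adj.counit.app X)) :=
    ⟨adj.unit.app (r.obj X), adj.right_triangle_components X⟩
  have : IsSplitEpi (r.map (adj.counit.app X)) := ⟨⟨hsplit⟩⟩
  have : Epi (r.map (adj.counit.app X)) := inferInstance
  have e : r.obj (cokernel (adj.counit.app X)) ≅ cokernel (r.map (adj.counit.app X)) :=
    (asIso (cokernelComparison (adj.counit.app X) r)).symm
  exact IsZero.of_iso (isZero_zero _) (e ≪≫ cokernel.ofEpi _)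

omit [Abelian Q] [r.Additive] [PreservesFiniteLimits r] [PreservesFiniteColimits r] in
lemma eps_comp_zero {X : A} {Y : A} (hY : IsZero (r.obj Y)) (f : X ⟶ Y) :
    adj.counit.app X ≫ f = 0 := by
  apply (adj.homEquiv _ _).injective
  exact hY.eq_of_tgt _ _

/-- The hom-equivalence defining the left adjoint of the inclusion. -/
noncomputable def cokerEquiv (X : A) (Y : ObjectProperty.FullSubcategory (fun X : A => IsZero (r.obj X))) :
    ((⟨cokernel (adj.counit.app X), r_coker_zero r rL adj X⟩ :
        ObjectProperty.FullSubcategory (fun X : A => IsZero (r.obj X))) ⟶ Y) ≃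
      (X ⟶ (ObjectProperty.ι (fun X : A => IsZero (r.obj X))).obj Y) where
  toFun g := cokernel.π _ ≫ g.hom
  invFun f := ObjectProperty.homMk (cokernel.desc _ f (eps_comp_zero r rL adj Y.2 f))
  left_inv g := by
    apply ObjectProperty.hom_ext
    apply coequalizer.hom_ext
    simp
  right_inv f := by simp

end Aux

/-- Let `A` be an abelian category, `S ⊆ A` the Serre subcategory of objects killed by
the exact quotient functor `r : A ⥤ Q`, `i : S ⥤ A` the inclusion, and suppose `r` has a
fully faithful left adjoint `r_L`. Then `i` has a left adjoint `i_L` given by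
`i_L(X) = Coker(ε_X : r_L(r(X)) → X)`, where `ε` is the counit of `r_L ⊣ r`. -/
theorem serre_inclusion_has_left_adjoint_cokernel
    {A Q : Type*} [Category A] [Category Q] [Abelian A] [Abelian Q]
    (r : A ⥤ Q) (rL : Q ⥤ A) (adj : rL ⊣ r)
    [r.Additive] [PreservesFiniteLimits r] [PreservesFiniteColimits r] [r.EssSurj]
    [rL.Full] [rL.Faithful] :
    ∃ (iL : A ⥤ ObjectProperty.FullSubcategory (fun X : A => IsZero (r.obj X)))
      (_ : iL ⊣ ObjectProperty.ι (fun X : A => IsZero (r.obj X))),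
      ∀ X : A,
        Nonempty
          ((ObjectProperty.ι (fun X : A => IsZero (r.obj X))).obj (iL.obj X) ≅
            cokernel (adj.counit.app X)) := by
  have he : ∀ X Y Y' (g : Y ⟶ Y') (h), cokerEquiv r rL adj X Y' (h ≫ g) =
      cokerEquiv r rL adj X Y h ≫
        (ObjectProperty.ι (fun X : A => IsZero (r.obj X))).map g := fun X Y Y' g h => by
    simp only [cokerEquiv, Equiv.coe_fn_mk, ObjectProperty.ι_map,
      ObjectProperty.FullSubcategory.comp_hom]
    exact (Category.assoc _ _ _).symm
  exact ⟨Adjunction.leftAdjointOfEquiv (cokerEquiv r rL adj) he,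
    Adjunction.adjunctionOfEquivLeft (cokerEquiv r rL adj) he,
    fun X => ⟨Iso.refl _⟩⟩
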